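/- Let T be a triangulated category satisfying the octahedral axiom, with shift functor Σ, and let P be a connective class of objects closed under isomorphisms and finite direct sums and containing 0. Set V_n := P ∗ ΣP ∗ ⋯ ∗ Σ^n P. Then for every distinguished triangle X → Y → Z → ΣX with X ∈ V_n and Y ∈ V_n, one has Z ∈ V_{n+1}. -/

import Mathlib

set_option linter.unusedSectionVars false


/-!
Statement 1: In a triangulated category `C` (satisfying the octahedral axiom) with a
connective class of objects `P` (closed under isomorphisms, closed under finite direct sums,
containing 0),
for a distinguished triangle `X ⟶ Y ⟶ Z ⟶ ΣX` with `X, Y ∈ V n = P ∗ ΣP ∗ ⋯ ∗ Σⁿ P`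
one has `Z ∈ V (n+1)`.
-/

open CategoryTheory Limits Pretriangulated

universe v u

namespace AuslanderIyamaStmt1

variable {C : Type u} [Category.{v} C] [HasZeroObject C] [HasShift C ℤ] [Preadditive C]
  [∀ n : ℤ, (shiftFunctor C n).Additive] [Pretriangulated C] [HasBinaryBiproducts C]

/-- `S₁ ∗ S₂`: objects `Y` fitting in a distinguished triangle `X ⟶ Y ⟶ Z ⟶ X⟦1⟧`
with `X ∈ S₁` and `Z ∈ S₂`. -/
def star (S₁ S₂ : Set C) : Set C :=
  {Y | ∃ (X Z : C) (f : X ⟶ Y) (g : Y ⟶ Z) (h : Z ⟶ X⟦(1 : ℤ)⟧),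
    (Triangle.mk f g h ∈ distTriang C) ∧ X ∈ S₁ ∧ Z ∈ S₂}

/-- `Σⁿ S`, closed under isomorphism. -/
def shiftSet (n : ℤ) (S : Set C) : Set C :=
  {X | ∃ Y ∈ S, Nonempty (X ≅ Y⟦n⟧)}

/-- `V n = P ∗ ΣP ∗ ⋯ ∗ Σⁿ P` (associated to the left; by the octahedral axiom `∗` is
associative so the grouping is irrelevant). -/
def V (P : Set C) : ℕ → Set C
  | 0 => P
  | n + 1 => star (V P n) (shiftSet ((n : ℤ) + 1) P)

/-- star membership from a distinguished triangle. -/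
lemma mem_star' {S₁ S₂ : Set C} {T : Triangle C} (hd : T ∈ distTriang C)
    (h1 : T.obj₁ ∈ S₁) (h2 : T.obj₃ ∈ S₂) : T.obj₂ ∈ star S₁ S₂ :=
  ⟨T.obj₁, T.obj₃, T.mor₁, T.mor₂, T.mor₃, hd, h1, h2⟩

lemma star_iso {S₁ S₂ : Set C} {A B : C} (e : A ≅ B) (hA : A ∈ star S₁ S₂) :
    B ∈ star S₁ S₂ := by
  obtain ⟨X, Z, f, g, h, hd, hX, hZ⟩ := hA
  refine ⟨X, Z, f ≫ e.hom, e.inv ≫ g, h, ?_, hX, hZ⟩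
  refine isomorphic_distinguished _ hd _ ?_
  exact Triangle.isoMk _ _ (Iso.refl X) e.symm (Iso.refl Z) (by simp [Triangle.mk]) (by simp [Triangle.mk])
    (by simp [Triangle.mk])

lemma shiftSet_iso {a : ℤ} {S : Set C} {A B : C} (e : A ≅ B) (hA : A ∈ shiftSet a S) :
    B ∈ shiftSet a S := by
  obtain ⟨Y, hY, ⟨e'⟩⟩ := hA
  exact ⟨Y, hY, ⟨e.symm ≪≫ e'⟩⟩

lemma V_iso (P : Set C) (hPiso : ∀ ⦃X Y : C⦄, (X ≅ Y) → X ∈ P → Y ∈ P) :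
    ∀ (n : ℕ) ⦃A B : C⦄ (_ : A ≅ B), A ∈ V P n → B ∈ V P n
  | 0, _, _, e, hA => hPiso e hA
  | (_ + 1), _, _, e, hA => star_iso e hA

lemma mem_shiftSet_shift {a : ℤ} {S : Set C} {A : C} (hA : A ∈ shiftSet a S) (b : ℤ) :
    A⟦b⟧ ∈ shiftSet (a + b) S := by
  obtain ⟨Y, hY, ⟨e⟩⟩ := hA
  exact ⟨Y, hY, ⟨(shiftFunctor C b).mapIso e ≪≫ ((shiftFunctorAdd' C a b (a + b) rfl).app Y).symm⟩⟩

/-- connectivity: any map from `Σᵃ P` to `Σᵇ P` with `a < b` vanishes. -/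
lemma conn_vanish (P : Set C)
    (hPconn : ∀ ⦃X Y : C⦄, X ∈ P → Y ∈ P → ∀ n : ℤ, 1 ≤ n → ∀ f : X ⟶ Y⟦n⟧, f = 0)
    {a b : ℤ} (hab : a < b) {Q S : C} (hQ : Q ∈ shiftSet a P) (hS : S ∈ shiftSet b P)
    (φ : Q ⟶ S) : φ = 0 := by
  obtain ⟨P₁, hP₁, ⟨eQ⟩⟩ := hQ
  obtain ⟨P₀, hP₀, ⟨eS⟩⟩ := hS
  obtain ⟨χ, hχ⟩ := (shiftFunctor C a).map_surjective
    (eQ.inv ≫ φ ≫ eS.hom ≫ ((shiftFunctorAdd' C (b - a) a b (by ring)).app P₀).hom)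
  rw [hPconn hP₁ hP₀ (b - a) (by omega) χ, Functor.map_zero] at hχ
  have : φ = eQ.hom ≫ (eQ.inv ≫ φ ≫ eS.hom ≫
      ((shiftFunctorAdd' C (b - a) a b (by ring)).app P₀).hom) ≫
      ((shiftFunctorAdd' C (b - a) a b (by ring)).app P₀).inv ≫ eS.inv := by
    simp
  rw [this, ← hχ]
  simp

/-- Unshifting a distinguished triangle, for membership purposes. -/
lemma unshift_mem_star {S₁ S₂ : Set C} {A N B : C} {f : A ⟶ N} {g : N ⟶ B}
    {h : B ⟶ A⟦(1:ℤ)⟧} (hd : Triangle.mk f g h ∈ distTriang C)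
    (hA : A⟦(-1:ℤ)⟧ ∈ S₁) (hB : B⟦(-1:ℤ)⟧ ∈ S₂) :
    N⟦(-1:ℤ)⟧ ∈ star S₁ S₂ :=
  mem_star' (Triangle.shift_distinguished _ hd (-1)) hA hB

/-- flipped split triangle. -/
lemma flip_split {S M Q : C} (e : M ≅ S ⊞ Q) :
    Triangle.mk (biprod.inr ≫ e.inv : Q ⟶ M) (e.hom ≫ biprod.fst) (0 : S ⟶ Q⟦(1:ℤ)⟧) ∈
      distTriang C := by
  refine isomorphic_distinguished _ (binaryBiproductTriangle_distinguished Q S) _ ?_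
  exact Triangle.isoMk _ _ (Iso.refl _) (e ≪≫ biprod.braiding S Q) (Iso.refl _)
    (by apply biprod.hom_ext <;> simp [Triangle.mk, binaryBiproductTriangle])
    (by simp [Triangle.mk, binaryBiproductTriangle]) (by simp [Triangle.mk, binaryBiproductTriangle])

section
variable [IsTriangulated C] (P : Set C)

/-- absorption: `V n ∗ Σᵏ P ⊆ V n` for `k ≤ n`. -/
lemma absorb
    (hPiso : ∀ ⦃X Y : C⦄, (X ≅ Y) → X ∈ P → Y ∈ P)
    (hPsum : ∀ ⦃X Y : C⦄, X ∈ P → Y ∈ P → (X ⊞ Y) ∈ P)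
    (hPconn : ∀ ⦃X Y : C⦄, X ∈ P → Y ∈ P → ∀ n : ℤ, 1 ≤ n → ∀ f : X ⟶ Y⟦n⟧, f = 0) :
    ∀ (n k : ℕ), k ≤ n → ∀ {Z : C}, Z ∈ star (V P n) (shiftSet (k : ℤ) P) → Z ∈ V P n := by
  intro n
  induction n with
  | zero =>
    intro k hk Z hZ
    interval_cases k
    obtain ⟨A, Q, f, g, h, hd, hA, hQ⟩ := hZ
    have hA1 : A⟦(1:ℤ)⟧ ∈ shiftSet (1 : ℤ) P := ⟨A, hA, ⟨Iso.refl _⟩⟩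
    have h0 : h = 0 := conn_vanish P hPconn (by norm_num) hQ hA1 h
    obtain ⟨e, -, -⟩ :=
      exists_iso_binaryBiproduct_of_distTriang (Triangle.mk f g h) hd h0
    have hQP : Q ∈ P := by
      obtain ⟨Y, hY, ⟨e'⟩⟩ := hQ
      exact hPiso (e' ≪≫ (shiftFunctorZero C ℤ).app Y).symm hY
    exact hPiso e.symm (hPsum hA hQP)
  | succ n ih =>
    intro k hk Z hZ
    obtain ⟨A, Q, f, g, h, hd, hA, hQ⟩ := hZ
    obtain ⟨A', S, a₁, a₂, a₃, hdA, hA', hS⟩ := hA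
    obtain ⟨M, m₁, m₂, hdM⟩ := distinguished_cocone_triangle (a₁ ≫ f)
    let Oct := Triangulated.someOctahedron rfl hdA hd hdM
    have hS1 : S⟦(1:ℤ)⟧ ∈ shiftSet ((n : ℤ) + 1 + 1) P := mem_shiftSet_shift hS 1
    have h0 : h ≫ a₂⟦(1:ℤ)⟧' = 0 :=
      conn_vanish P hPconn (by omega) hQ hS1 _
    obtain ⟨e, -, -⟩ := exists_iso_binaryBiproduct_of_distTriang _ Oct.mem h0
    rcases Nat.lt_or_ge k (n + 1) with hlt | hge
    · -- k ≤ n : use a second octahedron and the induction hypothesis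
      have hdZM := rot_of_distTriang _ hdM
      have hdMS := rot_of_distTriang _ (flip_split e)
      obtain ⟨N, n₁, n₂, hdN⟩ := distinguished_cocone_triangle (m₁ ≫ (e.hom ≫ biprod.fst))
      let Oct2 := Triangulated.someOctahedron rfl hdZM hdMS hdN
      have hNA : A'⟦(1:ℤ)⟧⟦(-1:ℤ)⟧ ∈ V P n :=
        V_iso P hPiso n (((shiftFunctorCompIsoId C (1:ℤ) (-1:ℤ) (by norm_num)).app A').symm) hA'
      have hNQ : Q⟦(1:ℤ)⟧⟦(-1:ℤ)⟧ ∈ shiftSet (k : ℤ) P :=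
        shiftSet_iso (((shiftFunctorCompIsoId C (1:ℤ) (-1:ℤ) (by norm_num)).app Q).symm) hQ
      have hN : N⟦(-1:ℤ)⟧ ∈ V P n :=
        ih k (by omega) (unshift_mem_star Oct2.mem hNA hNQ)
      exact mem_star' (inv_rot_of_distTriang _ hdN) hN hS
    · -- k = n + 1 : M is a shifted object of P
      have hk' : k = n + 1 := by omega
      subst hk'
      have hQ' : Q ∈ shiftSet ((n : ℤ) + 1) P := by
        have : ((n + 1 : ℕ) : ℤ) = (n : ℤ) + 1 := by push_cast; ring
        rwa [this] at hQ
      obtain ⟨P₀, hP₀, ⟨eS⟩⟩ := hS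
      obtain ⟨P₁, hP₁, ⟨eQ⟩⟩ := hQ'
      have hM : M ∈ shiftSet ((n : ℤ) + 1) P := by
        haveI : PreservesBinaryBiproduct P₀ P₁ (shiftFunctor C ((n : ℤ) + 1)) :=
          preservesBinaryBiproduct_of_preservesBiproduct _ _ _
        refine ⟨P₀ ⊞ P₁, hPsum hP₀ hP₁, ⟨?_⟩⟩
        exact e ≪≫ biprod.mapIso eS eQ ≪≫
          ((shiftFunctor C ((n : ℤ) + 1)).mapBiprod P₀ P₁).symm
      exact mem_star' hdM hA' hM

/-- absorption of a shifted `V m` for `m + 1 ≤ n`. -/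
lemma absorbVshift
    (hPiso : ∀ ⦃X Y : C⦄, (X ≅ Y) → X ∈ P → Y ∈ P)
    (hPsum : ∀ ⦃X Y : C⦄, X ∈ P → Y ∈ P → (X ⊞ Y) ∈ P)
    (hPconn : ∀ ⦃X Y : C⦄, X ∈ P → Y ∈ P → ∀ n : ℤ, 1 ≤ n → ∀ f : X ⟶ Y⟦n⟧, f = 0)
    (n : ℕ) :
    ∀ (m : ℕ), m + 1 ≤ n → ∀ {Z : C}, Z ∈ star (V P n) (shiftSet 1 (V P m)) → Z ∈ V P n := by
  intro m
  induction m generalizing n with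
  | zero =>
    intro hm Z hZ
    exact absorb P hPiso hPsum hPconn n 1 hm (by exact_mod_cast hZ)
  | succ m ih =>
    intro hm Z hZ
    obtain ⟨A, Q, a₁, a₂, a₃, hdZ, hA, hQ⟩ := hZ
    obtain ⟨B, hB, ⟨eQ⟩⟩ := hQ
    obtain ⟨B', S₀, b₁, b₂, b₃, hdB, hB', hS₀⟩ := hB
    -- shift the triangle for B by 1 and transport the middle object along eQ
    have hdB1 := Triangle.shift_distinguished _ hdB (1 : ℤ)
    set T1 := (CategoryTheory.shiftFunctor (Triangle C) (1 : ℤ)).obj (Triangle.mk b₁ b₂ b₃)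
      with hT1
    have hdT' : Triangle.mk (T1.mor₁ ≫ eQ.inv) (eQ.hom ≫ T1.mor₂) T1.mor₃ ∈ distTriang C := by
      refine isomorphic_distinguished _ hdB1 _ ?_
      exact Triangle.isoMk _ _ (Iso.refl _) eQ (Iso.refl _)
        (by simp [Triangle.mk, T1, Triangle.shiftFunctor])
        (by simp [Triangle.mk, T1, Triangle.shiftFunctor]) (by simp [Triangle.mk, T1, Triangle.shiftFunctor])
    -- octahedron on Z ⟶ Q ⟶ S₀⟦1⟧
    have hdu := rot_of_distTriang _ hdZ
    have hdv := rot_of_distTriang _ hdT'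
    obtain ⟨N, n₁, n₂, hdN⟩ :=
      distinguished_cocone_triangle (a₂ ≫ (eQ.hom ≫ T1.mor₂))
    let Oct := Triangulated.someOctahedron rfl hdu hdv hdN
    have hNA : A⟦(1:ℤ)⟧⟦(-1:ℤ)⟧ ∈ V P n :=
      V_iso P hPiso n (((shiftFunctorCompIsoId C (1:ℤ) (-1:ℤ) (by norm_num)).app A).symm) hA
    have hNB : T1.obj₁⟦(1:ℤ)⟧⟦(-1:ℤ)⟧ ∈ shiftSet 1 (V P m) := by
      refine ⟨B', hB', ⟨?_⟩⟩
      exact (shiftFunctorCompIsoId C (1:ℤ) (-1:ℤ) (by norm_num)).app (B'⟦(1:ℤ)⟧)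
    have hN : N⟦(-1:ℤ)⟧ ∈ V P n := ih n (by omega) (unshift_mem_star Oct.mem hNA hNB)
    have hS₀1 : S₀⟦(1:ℤ)⟧ ∈ shiftSet (((m + 2 : ℕ) : ℤ)) P := by
      have : ((m + 2 : ℕ) : ℤ) = ((m : ℤ) + 1) + 1 := by push_cast; ring
      rw [this]
      exact mem_shiftSet_shift hS₀ 1
    exact absorb P hPiso hPsum hPconn n (m + 2) (by omega)
      (mem_star' (inv_rot_of_distTriang _ hdN) hN hS₀1)

end

theorem statement1 [IsTriangulated C] (P : Set C)
    (hPiso : ∀ ⦃X Y : C⦄, (X ≅ Y) → X ∈ P → Y ∈ P)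
    (hPsum : ∀ ⦃X Y : C⦄, X ∈ P → Y ∈ P → (X ⊞ Y) ∈ P)
    (hPzero : ∀ ⦃X : C⦄, IsZero X → X ∈ P)
    (hPconn : ∀ ⦃X Y : C⦄, X ∈ P → Y ∈ P → ∀ n : ℤ, 1 ≤ n → ∀ f : X ⟶ Y⟦n⟧, f = 0)
    (n : ℕ) {X Y Z : C} (f : X ⟶ Y) (g : Y ⟶ Z) (h : Z ⟶ X⟦(1 : ℤ)⟧)
    (hT : Triangle.mk f g h ∈ distTriang C)
    (hX : X ∈ V P n) (hY : Y ∈ V P n) :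
    Z ∈ V P (n + 1) := by
  cases n with
  | zero =>
    have hX1 : X⟦(1:ℤ)⟧ ∈ shiftSet ((0 : ℤ) + 1) P := by
      rw [show ((0:ℤ) + 1) = 1 by norm_num]
      exact ⟨X, hX, ⟨Iso.refl _⟩⟩
    exact mem_star' (rot_of_distTriang _ hT) hY hX1
  | succ n =>
    obtain ⟨X', S, x₁, x₂, x₃, hdX, hX', hS⟩ := hX
    have hdrr := rot_of_distTriang _ (rot_of_distTriang _ hT)
    have hdX1 := Triangle.shift_distinguished _ hdX (1 : ℤ)
    set T1 := (CategoryTheory.shiftFunctor (Triangle C) (1 : ℤ)).obj (Triangle.mk x₁ x₂ x₃)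
      with hT1
    have hdv := rot_of_distTriang _ hdX1
    obtain ⟨N, n₁, n₂, hdN⟩ := distinguished_cocone_triangle (h ≫ T1.mor₂)
    let Oct := Triangulated.someOctahedron rfl hdrr hdv hdN
    have hNY : Y⟦(1:ℤ)⟧⟦(-1:ℤ)⟧ ∈ V P (n + 1) :=
      V_iso P hPiso (n + 1)
        (((shiftFunctorCompIsoId C (1:ℤ) (-1:ℤ) (by norm_num)).app Y).symm) hY
    have hNX : T1.obj₁⟦(1:ℤ)⟧⟦(-1:ℤ)⟧ ∈ shiftSet 1 (V P n) := by
      refine ⟨X', hX', ⟨?_⟩⟩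
      exact (shiftFunctorCompIsoId C (1:ℤ) (-1:ℤ) (by norm_num)).app (X'⟦(1:ℤ)⟧)
    have hN : N⟦(-1:ℤ)⟧ ∈ V P (n + 1) :=
      absorbVshift P hPiso hPsum hPconn (n + 1) n (by omega)
        (unshift_mem_star Oct.mem hNY hNX)
    have hS1 : S⟦(1:ℤ)⟧ ∈ shiftSet (((n + 1 : ℕ) : ℤ) + 1) P := by
      have : (((n + 1 : ℕ) : ℤ) + 1) = ((n : ℤ) + 1) + 1 := by push_cast; ring
      rw [this]
      exact mem_shiftSet_shift hS 1
    exact mem_star' (inv_rot_of_distTriang _ hdN) hN hS1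

end AuslanderIyamaStmt1
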